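/- Let $l_1, l_2, l_3$ be positive reals satisfying the strict triangle inequalities, and let $r_1, r_2, r_3$ be positive reals with $l_i > r_j$ and $l_i > r_k$ for all $\{i,j,k\} = \{1,2,3\}$. Then $l_1^2 + l_2^2 + l_3^2 + \Xi_1 r_1^2 + \Xi_2 r_2^2 + \Xi_3 r_3^2 > 0$, where $\Xi_1 = (l_1^2 l_2^2 + l_1^2 l_3^2 - l_2^4 - l_3^4)/(l_2^2 l_3^2)$, $\Xi_2 = (l_2^2 l_1^2 + l_2^2 l_3^2 - l_1^4 - l_3^4)/(l_1^2 l_3^2)$, $\Xi_3 = (l_3^2 l_1^2 + l_3^2 l_2^2 - l_1^4 - l_2^4)/(l_1^2 l_2^2)$. -/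
import Mathlib

set_option maxHeartbeats 1000000 in
private lemma key_ineq (x y z u v w : ℝ)
    (hx : 0 < x) (hy : 0 < y) (hz : 0 < z)
    (hu : 0 < u) (hv : 0 < v) (hw : 0 < w)
    (hT : 0 < 2*(x*y + y*z + z*x) - x^2 - y^2 - z^2)
    (huy : u ≤ y) (huz : u ≤ z) (hvx : v ≤ x) (hvz : v ≤ z)
    (hwx : w ≤ x) (hwy : w ≤ y) :
    0 < x*y*z*(x+y+z) + x*u*((y+z)*(x-y-z)+2*y*z)
      + y*v*((x+z)*(y-x-z)+2*x*z) + z*w*((x+y)*(z-x-y)+2*x*y) := by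
  have hc1 : ((y+z)*(x-y-z)+2*y*z) = ((y+z)*(x-y-z)+2*y*z) := rfl
  set c1 : ℝ := (y+z)*(x-y-z)+2*y*z with hc1d
  set c2 : ℝ := (x+z)*(y-x-z)+2*x*z with hc2d
  set c3 : ℝ := (x+y)*(z-x-y)+2*x*y with hc3d
  set T : ℝ := 2*(x*y + y*z + z*x) - x^2 - y^2 - z^2 with hTd
  set S : ℝ := x + y + z with hSd
  have hS : 0 < S := by rw [hSd]; linarith
  -- helper facts as positivity of products
  rcases le_or_gt 0 c1 with h1 | h1 <;>
  rcases le_or_gt 0 c2 with h2 | h2 <;>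
  rcases le_or_gt 0 c3 with h3 | h3
  · have q1 : 0 ≤ x*u*c1 := by positivity
    have q2 : 0 ≤ y*v*c2 := by positivity
    have q3 : 0 ≤ z*w*c3 := by positivity
    have q0 : 0 < x*y*z*S := by positivity
    linarith
  · -- c3 < 0 only
    have q1 : 0 ≤ x*u*c1 := by positivity
    have q2 : 0 ≤ y*v*c2 := by positivity
    rcases lt_or_ge 0 (x*S + c3) with hc | hc
    · have q3 : 0 ≤ z*(y-w)*(-c3) :=
        mul_nonneg (mul_nonneg hz.le (by linarith)) (by linarith)
      have q0 : 0 < y*z*(x*S + c3) := by positivity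
      have e : x*y*z*S + x*u*c1 + y*v*c2 + z*w*c3
          = y*z*(x*S + c3) + z*(y-w)*(-c3) + x*u*c1 + y*v*c2 := by
        rw [hSd]; ring
      linarith [e ▸ (by linarith : (0:ℝ) < y*z*(x*S + c3) + z*(y-w)*(-c3) + x*u*c1 + y*v*c2)]
    · -- then y > z + x fails... derive 0 < y*S + c3
      have hzy : y < z + x → False := by
        intro h'
        have hle : y*y ≤ y*(z+x) := mul_le_mul_of_nonneg_left h'.le hy.le
        have hxz : 0 < z*x := mul_pos hz hx
        have : x*S + c3 = 2*z*x + y*(z+x-y) := by rw [hSd, hc3d]; ring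
        nlinarith
      have hy' : z + x ≤ y := by by_contra h'; exact hzy (by linarith)
      have hc' : 0 < y*S + c3 := by
        have e2 : y*S + c3 = 2*z*y + x*(z+y-x) := by rw [hSd, hc3d]; ring
        have : x*(z+y-x) ≥ x*(2*z) := by
          apply mul_le_mul_of_nonneg_left _ hx.le; linarith
        nlinarith [mul_pos hz hy, mul_pos hx hz]
      have q3 : 0 ≤ z*(x-w)*(-c3) :=
        mul_nonneg (mul_nonneg hz.le (by linarith)) (by linarith)
      have q0 : 0 < x*z*(y*S + c3) := by positivity
      have e : x*y*z*S + x*u*c1 + y*v*c2 + z*w*c3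
          = x*z*(y*S + c3) + z*(x-w)*(-c3) + x*u*c1 + y*v*c2 := by
        rw [hSd]; ring
      linarith [e ▸ (by linarith : (0:ℝ) < x*z*(y*S + c3) + z*(x-w)*(-c3) + x*u*c1 + y*v*c2)]
  · -- c2 < 0 only
    have q1 : 0 ≤ x*u*c1 := by positivity
    have q3 : 0 ≤ z*w*c3 := by positivity
    rcases lt_or_ge 0 (x*S + c2) with hc | hc
    · have q2 : 0 ≤ y*(z-v)*(-c2) :=
        mul_nonneg (mul_nonneg hy.le (by linarith)) (by linarith)
      have q0 : 0 < y*z*(x*S + c2) := by positivity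
      have e : x*y*z*S + x*u*c1 + y*v*c2 + z*w*c3
          = y*z*(x*S + c2) + y*(z-v)*(-c2) + x*u*c1 + z*w*c3 := by
        rw [hSd]; ring
      linarith [e ▸ (by linarith : (0:ℝ) < y*z*(x*S + c2) + y*(z-v)*(-c2) + x*u*c1 + z*w*c3)]
    · have hzy : z < y + x → False := by
        intro h'
        have hle : z*z ≤ z*(y+x) := mul_le_mul_of_nonneg_left h'.le hz.le
        have hxy : 0 < y*x := mul_pos hy hx
        have : x*S + c2 = 2*y*x + z*(y+x-z) := by rw [hSd, hc2d]; ring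
        nlinarith
      have hz' : y + x ≤ z := by by_contra h'; exact hzy (by linarith)
      have hc' : 0 < z*S + c2 := by
        have e2 : z*S + c2 = 2*y*z + x*(y+z-x) := by rw [hSd, hc2d]; ring
        have : x*(y+z-x) ≥ x*(2*y) := by
          apply mul_le_mul_of_nonneg_left _ hx.le; linarith
        nlinarith [mul_pos hy hz, mul_pos hx hy]
      have q2 : 0 ≤ y*(x-v)*(-c2) :=
        mul_nonneg (mul_nonneg hy.le (by linarith)) (by linarith)
      have q0 : 0 < x*y*(z*S + c2) := by positivity
      have e : x*y*z*S + x*u*c1 + y*v*c2 + z*w*c3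
          = x*y*(z*S + c2) + y*(x-v)*(-c2) + x*u*c1 + z*w*c3 := by
        rw [hSd]; ring
      linarith [e ▸ (by linarith : (0:ℝ) < x*y*(z*S + c2) + y*(x-v)*(-c2) + x*u*c1 + z*w*c3)]
  · -- c2 < 0, c3 < 0 : c2 + c3 = T - x*S
    have q1 : 0 ≤ x*u*c1 := by positivity
    have q2 : 0 ≤ y*(z-v)*(-c2) :=
      mul_nonneg (mul_nonneg hy.le (by linarith)) (by linarith)
    have q3 : 0 ≤ z*(y-w)*(-c3) :=
      mul_nonneg (mul_nonneg hz.le (by linarith)) (by linarith)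
    have q0 : 0 < y*z*T := by positivity
    have e : x*y*z*S + x*u*c1 + y*v*c2 + z*w*c3
        = y*z*T + y*(z-v)*(-c2) + z*(y-w)*(-c3) + x*u*c1 := by
      rw [hSd, hTd, hc2d, hc3d]; ring
    linarith [e ▸ (by linarith : (0:ℝ) < y*z*T + y*(z-v)*(-c2) + z*(y-w)*(-c3) + x*u*c1)]
  · -- c1 < 0 only
    have q2 : 0 ≤ y*v*c2 := by positivity
    have q3 : 0 ≤ z*w*c3 := by positivity
    rcases lt_or_ge 0 (y*S + c1) with hc | hc
    · have q1 : 0 ≤ x*(z-u)*(-c1) :=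
        mul_nonneg (mul_nonneg hx.le (by linarith)) (by linarith)
      have q0 : 0 < x*z*(y*S + c1) := by positivity
      have e : x*y*z*S + x*u*c1 + y*v*c2 + z*w*c3
          = x*z*(y*S + c1) + x*(z-u)*(-c1) + y*v*c2 + z*w*c3 := by
        rw [hSd]; ring
      linarith [e ▸ (by linarith : (0:ℝ) < x*z*(y*S + c1) + x*(z-u)*(-c1) + y*v*c2 + z*w*c3)]
    · have hzy : z < y + x → False := by
        intro h'
        have hle : z*z ≤ z*(y+x) := mul_le_mul_of_nonneg_left h'.le hz.le
        have hxy : 0 < x*y := mul_pos hx hy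
        have : y*S + c1 = 2*x*y + z*(x+y-z) := by rw [hSd, hc1d]; ring
        nlinarith
      have hz' : y + x ≤ z := by by_contra h'; exact hzy (by linarith)
      have hc' : 0 < z*S + c1 := by
        have e2 : z*S + c1 = 2*x*z + y*(x+z-y) := by rw [hSd, hc1d]; ring
        have : y*(x+z-y) ≥ y*(2*x) := by
          apply mul_le_mul_of_nonneg_left _ hy.le; linarith
        nlinarith [mul_pos hx hz, mul_pos hx hy]
      have q1 : 0 ≤ x*(y-u)*(-c1) :=
        mul_nonneg (mul_nonneg hx.le (by linarith)) (by linarith)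
      have q0 : 0 < x*y*(z*S + c1) := by positivity
      have e : x*y*z*S + x*u*c1 + y*v*c2 + z*w*c3
          = x*y*(z*S + c1) + x*(y-u)*(-c1) + y*v*c2 + z*w*c3 := by
        rw [hSd]; ring
      linarith [e ▸ (by linarith : (0:ℝ) < x*y*(z*S + c1) + x*(y-u)*(-c1) + y*v*c2 + z*w*c3)]
  · -- c1 < 0, c3 < 0 : c1 + c3 = T - y*S
    have q2 : 0 ≤ y*v*c2 := by positivity
    have q1 : 0 ≤ x*(z-u)*(-c1) :=
      mul_nonneg (mul_nonneg hx.le (by linarith)) (by linarith)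
    have q3 : 0 ≤ z*(x-w)*(-c3) :=
      mul_nonneg (mul_nonneg hz.le (by linarith)) (by linarith)
    have q0 : 0 < x*z*T := by positivity
    have e : x*y*z*S + x*u*c1 + y*v*c2 + z*w*c3
        = x*z*T + x*(z-u)*(-c1) + z*(x-w)*(-c3) + y*v*c2 := by
      rw [hSd, hTd, hc1d, hc3d]; ring
    linarith [e ▸ (by linarith : (0:ℝ) < x*z*T + x*(z-u)*(-c1) + z*(x-w)*(-c3) + y*v*c2)]
  · -- c1 < 0, c2 < 0 : c1 + c2 = T - z*S
    have q3 : 0 ≤ z*w*c3 := by positivity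
    have q1 : 0 ≤ x*(y-u)*(-c1) :=
      mul_nonneg (mul_nonneg hx.le (by linarith)) (by linarith)
    have q2 : 0 ≤ y*(x-v)*(-c2) :=
      mul_nonneg (mul_nonneg hy.le (by linarith)) (by linarith)
    have q0 : 0 < x*y*T := by positivity
    have e : x*y*z*S + x*u*c1 + y*v*c2 + z*w*c3
        = x*y*T + x*(y-u)*(-c1) + y*(x-v)*(-c2) + z*w*c3 := by
      rw [hSd, hTd, hc1d, hc2d]; ring
    linarith [e ▸ (by linarith : (0:ℝ) < x*y*T + x*(y-u)*(-c1) + y*(x-v)*(-c2) + z*w*c3)]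
  · exfalso
    have e : x*c1 + y*c2 + z*c3 = 0 := by rw [hc1d, hc2d, hc3d]; ring
    have := mul_neg_of_pos_of_neg hx h1
    have := mul_neg_of_pos_of_neg hy h2
    have := mul_neg_of_pos_of_neg hz h3
    linarith

set_option maxHeartbeats 1000000 in
theorem trace_positive_ineq
    (l1 l2 l3 r1 r2 r3 : ℝ)
    (hl1 : 0 < l1) (hl2 : 0 < l2) (hl3 : 0 < l3)
    (t1 : l1 < l2 + l3) (t2 : l2 < l3 + l1) (t3 : l3 < l1 + l2)
    (hr1 : 0 < r1) (hr2 : 0 < r2) (hr3 : 0 < r3)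
    (h12 : l1 > r2) (h13 : l1 > r3)
    (h21 : l2 > r1) (h23 : l2 > r3)
    (h31 : l3 > r1) (h32 : l3 > r2) :
    l1 ^ 2 + l2 ^ 2 + l3 ^ 2
      + (l1 ^ 2 * l2 ^ 2 + l1 ^ 2 * l3 ^ 2 - l2 ^ 4 - l3 ^ 4) / (l2 ^ 2 * l3 ^ 2) * r1 ^ 2
      + (l2 ^ 2 * l1 ^ 2 + l2 ^ 2 * l3 ^ 2 - l1 ^ 4 - l3 ^ 4) / (l1 ^ 2 * l3 ^ 2) * r2 ^ 2
      + (l3 ^ 2 * l1 ^ 2 + l3 ^ 2 * l2 ^ 2 - l1 ^ 4 - l2 ^ 4) / (l1 ^ 2 * l2 ^ 2) * r3 ^ 2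
      > 0 := by
  have hT : 0 < 2*(l1^2*l2^2 + l2^2*l3^2 + l3^2*l1^2) - (l1^2)^2 - (l2^2)^2 - (l3^2)^2 := by
    have hp : 0 < (l1+l2+l3)*((l2+l3-l1)*((l3+l1-l2)*(l1+l2-l3))) := by
      apply mul_pos (by linarith)
      apply mul_pos (by linarith)
      apply mul_pos (by linarith) (by linarith)
    have e : (l1+l2+l3)*((l2+l3-l1)*((l3+l1-l2)*(l1+l2-l3)))
        = 2*(l1^2*l2^2 + l2^2*l3^2 + l3^2*l1^2) - (l1^2)^2 - (l2^2)^2 - (l3^2)^2 := by ring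
    linarith [e ▸ hp]
  have sq_le : ∀ a b : ℝ, 0 < a → a < b → a^2 ≤ b^2 := by
    intro a b ha hab
    nlinarith
  have key := key_ineq (l1^2) (l2^2) (l3^2) (r1^2) (r2^2) (r3^2)
    (by positivity) (by positivity) (by positivity)
    (by positivity) (by positivity) (by positivity)
    hT
    (sq_le _ _ hr1 h21) (sq_le _ _ hr1 h31) (sq_le _ _ hr2 h12) (sq_le _ _ hr2 h32)
    (sq_le _ _ hr3 h13) (sq_le _ _ hr3 h23)
  have hD : (0:ℝ) < l1^2 * l2^2 * l3^2 := by positivity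
  have hrw : l1 ^ 2 + l2 ^ 2 + l3 ^ 2
      + (l1 ^ 2 * l2 ^ 2 + l1 ^ 2 * l3 ^ 2 - l2 ^ 4 - l3 ^ 4) / (l2 ^ 2 * l3 ^ 2) * r1 ^ 2
      + (l2 ^ 2 * l1 ^ 2 + l2 ^ 2 * l3 ^ 2 - l1 ^ 4 - l3 ^ 4) / (l1 ^ 2 * l3 ^ 2) * r2 ^ 2
      + (l3 ^ 2 * l1 ^ 2 + l3 ^ 2 * l2 ^ 2 - l1 ^ 4 - l2 ^ 4) / (l1 ^ 2 * l2 ^ 2) * r3 ^ 2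
      = (l1^2*(l2^2)*(l3^2)*(l1^2+l2^2+l3^2)
        + l1^2*r1^2*((l2^2+l3^2)*(l1^2-l2^2-l3^2)+2*(l2^2)*(l3^2))
        + l2^2*r2^2*((l1^2+l3^2)*(l2^2-l1^2-l3^2)+2*(l1^2)*(l3^2))
        + l3^2*r3^2*((l1^2+l2^2)*(l3^2-l1^2-l2^2)+2*(l1^2)*(l2^2)))
        / (l1^2 * l2^2 * l3^2) := by
    field_simp
    ring
  rw [gt_iff_lt, hrw]
  exact div_pos key hD
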